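/- There exists a Borel probability measure μ on ℝ (absolutely continuous with respect to Lebesgue measure) such that the points −1 and 1 both lie in supp(μ), liminf_{ε→0} μ(B(−1,ε))/μ(B(1,ε)) = 0 and limsup_{ε→0} μ(B(−1,ε))/μ(B(1,ε)) = 2, and moreover for every x ∈ supp(μ) ∖ {1} one has liminf_{ε→0} μ(B(x,ε))/μ(B(1,ε)) = 0. In particular, the 'liminf-only' version of property M(μ, {1}) holds, yet the point 1 is not a global weak mode of μ, since limsup_{ε→0} μ(B(−1,ε))/μ(B(1,ε)) = 2 > 1. -/

import Mathlib

open MeasureTheory Metric Filter Set Topology ENNReal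

noncomputable section

/-- The topological support of a Borel measure on a metric space: the set of points all of
whose open balls have positive measure. -/
def measureSupport {X : Type*} [PseudoMetricSpace X] [MeasurableSpace X]
    (μ : Measure X) : Set X :=
  {x | ∀ r > 0, 0 < μ (Metric.ball x r)}

/-- `I` is an Onsager--Machlup functional for `μ` on `E`: for all `x₁ x₂ ∈ E`, the ratio of
small-ball probabilities tends to `exp (I x₂ - I x₁)` as the radius tends to `0⁺`. -/
def IsOMFunctional {X : Type*} [PseudoMetricSpace X] [MeasurableSpace X]
    (μ : Measure X) (E : Set X) (I : X → ℝ) : Prop :=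
  ∀ x₁ ∈ E, ∀ x₂ ∈ E,
    Filter.Tendsto (fun r : ℝ => μ (Metric.ball x₁ r) / μ (Metric.ball x₂ r))
      (𝓝[>] 0) (𝓝 (ENNReal.ofReal (Real.exp (I x₂ - I x₁))))

/-- Property `M(μ, E)`: there is `x⋆ ∈ E` such that for every `x ∉ E` the small-ball
probability ratio `μ(B(x,r)) / μ(B(x⋆,r))` tends to `0` as `r → 0⁺`. -/
def PropertyM {X : Type*} [PseudoMetricSpace X] [MeasurableSpace X]
    (μ : Measure X) (E : Set X) : Prop :=
  ∃ xs ∈ E, ∀ x ∉ E,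
    Filter.Tendsto (fun r : ℝ => μ (Metric.ball x r) / μ (Metric.ball xs r)) (𝓝[>] 0) (𝓝 0)
namespace OMCex

def r (n : ℕ) : ℝ := (2:ℝ)⁻¹ ^ (2^n)
lemma r_pos (n : ℕ) : 0 < r n := pow_pos (by norm_num) _
lemma r_le_half (n : ℕ) : r n ≤ 2⁻¹ := by
  have := pow_le_pow_of_le_one (by norm_num : (0:ℝ) ≤ 2⁻¹) (by norm_num)
    (Nat.one_le_two_pow (n := n))
  simpa [r] using this
lemma r_lt_one (n : ℕ) : r n < 1 := lt_of_le_of_lt (r_le_half n) (by norm_num)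
lemma r_succ (n : ℕ) : r (n+1) = r n ^ 2 := by rw [r, r, ← pow_mul, pow_succ]
lemma r_strict (n : ℕ) : r (n+1) < r n := by
  rw [r_succ]; nlinarith [r_pos n, r_lt_one n]
lemma r_anti : Antitone r := antitone_nat_of_succ_le fun n => (r_strict n).le
lemma r_tendsto : Tendsto r atTop (𝓝 0) := by
  apply squeeze_zero (fun n => (r_pos n).le) (fun n => ?_)
    (tendsto_pow_atTop_nhds_zero_of_lt_one (by norm_num : (0:ℝ) ≤ 2⁻¹) (by norm_num))
  exact pow_le_pow_of_le_one (by norm_num) (by norm_num) (Nat.le_of_lt (Nat.lt_two_pow_self (n := n)))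

/-- values of the small-ball mass of `μ` at `1` at breakpoints -/
def gs (n : ℕ) : ℝ := r (n+1)
/-- the breakpoint radii -/
def ts (n : ℕ) : ℝ := r (n+2)
/-- values of the small-ball mass of `μ` at `-1` at breakpoints -/
def hb (n : ℕ) : ℝ := if Even n then 2 * r (n+1) else r n * r (n+1)

lemma gs_pos (n : ℕ) : 0 < gs n := r_pos _
lemma ts_pos (n : ℕ) : 0 < ts n := r_pos _
lemma ts_strict (n : ℕ) : ts (n+1) < ts n := r_strict _
lemma ts_anti : Antitone ts := antitone_nat_of_succ_le fun n => (ts_strict n).le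
lemma ts_le_half (n : ℕ) : ts n ≤ 2⁻¹ := r_le_half _
lemma gs_step (n : ℕ) : gs (n+1) ≤ gs n := (r_strict _).le
lemma gs_nonneg (n : ℕ) : 0 ≤ gs n := (gs_pos n).le
lemma ts_eq_gs_sq (n : ℕ) : ts n = gs n ^ 2 := r_succ _
lemma gs_tendsto : Tendsto gs atTop (𝓝 0) := r_tendsto.comp (tendsto_add_atTop_nat 1)
lemma ts_tendsto : Tendsto ts atTop (𝓝 0) := r_tendsto.comp (tendsto_add_atTop_nat 2)

lemma hs_pos (n : ℕ) : 0 < hb n := by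
  unfold hb; split
  · nlinarith [r_pos (n+1)]
  · exact mul_pos (r_pos _) (r_pos _)
lemma hs_nonneg (n : ℕ) : 0 ≤ hb n := (hs_pos n).le
lemma hs_le_two_gs (n : ℕ) : hb n ≤ 2 * gs n := by
  unfold hb gs; split
  · exact le_rfl
  · nlinarith [r_pos n, r_pos (n+1), r_lt_one n]
lemma hs_even (n : ℕ) (h : Even n) : hb n = 2 * gs n := by unfold hb gs; rw [if_pos h]
lemma hs_odd (n : ℕ) (h : ¬ Even n) : hb n = r n * gs n := by unfold hb gs; rw [if_neg h]
lemma hs_step (n : ℕ) : hb (n+1) ≤ hb n := by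
  rcases Nat.even_or_odd n with he | ho
  · have hne : ¬ Even (n+1) := by simpa [Nat.even_add_one] using he
    rw [hs_even n he, hs_odd (n+1) hne, gs, gs]
    nlinarith [r_pos (n+1), r_pos (n+2), r_lt_one (n+2)]
  · have hne : ¬ Even n := Nat.not_even_iff_odd.mpr ho
    have hee : Even (n+1) := by simpa [Nat.even_add_one] using hne
    have hn1 : 1 ≤ n := by rcases ho with ⟨k, hk⟩; omega
    rw [hs_even (n+1) hee, hs_odd n hne, gs, gs]
    -- 2 * r (n+2) = 2 * r(n+1)^2 ≤ r n * r (n+1)  ⟸  2 r(n+1) ≤ r n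
    have h2 : 2 * r (n+1) ≤ r n := by
      rw [r_succ n]
      have : r n ≤ r 1 := r_anti hn1
      have h1 : r 1 = 4⁻¹ := by norm_num [r]
      nlinarith [r_pos n]
    rw [r_succ (n+1)]
    nlinarith [r_pos (n+1), r_pos n]
lemma hs_tendsto : Tendsto hb atTop (𝓝 0) := by
  have h2 : Tendsto (fun n => 2 * gs n) atTop (𝓝 0) := by
    simpa using gs_tendsto.const_mul 2
  exact squeeze_zero (fun n => (hs_pos n).le) (fun n => hs_le_two_gs n) h2


/-! ### the piecewise linear ladder -/

def slope (a : ℕ → ℝ) (n : ℕ) : ℝ := (a n - a (n+1)) / (ts n - ts (n+1))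
def PP (a : ℕ → ℝ) (n : ℕ) : ℝ≥0∞ := ENNReal.ofReal (slope a n)
def lval (a : ℕ → ℝ) (m : ℕ) (ε : ℝ) : ℝ := a (m+1) + (ε - ts (m+1)) * slope a m

lemma slope_nonneg (a : ℕ → ℝ) (hstep : ∀ n, a (n+1) ≤ a n) (n : ℕ) : 0 ≤ slope a n :=
  div_nonneg (sub_nonneg.mpr (hstep n)) (sub_nonneg.mpr (ts_strict n).le)

lemma ts_sub_ne (n : ℕ) : ts n - ts (n+1) ≠ 0 := sub_ne_zero.mpr (ts_strict n).ne'

lemma PP_mul_dt (a : ℕ → ℝ) (hstep : ∀ n, a (n+1) ≤ a n) (n : ℕ) :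
    PP a n * ENNReal.ofReal (ts n - ts (n+1)) = ENNReal.ofReal (a n - a (n+1)) := by
  rw [PP, ← ENNReal.ofReal_mul (slope_nonneg a hstep n), slope,
    div_mul_cancel₀ _ (ts_sub_ne n)]

lemma tele (a : ℕ → ℝ) (hstep : ∀ n, a (n+1) ≤ a n) (hlim : Tendsto a atTop (𝓝 0)) (m : ℕ) :
    ∑' i, ENNReal.ofReal (a (i + m) - a (i + m + 1)) = ENNReal.ofReal (a m) := by
  have ha : Antitone a := antitone_nat_of_succ_le hstep
  apply HasSum.tsum_eq
  rw [ENNReal.hasSum_iff_tendsto_nat]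
  have key : ∀ K, ∑ i ∈ Finset.range K, ENNReal.ofReal (a (i + m) - a (i + m + 1))
      = ENNReal.ofReal (a m - a (K + m)) := by
    intro K; induction K with
    | zero => simp
    | succ K ih =>
      have h1 : (0:ℝ) ≤ a m - a (K + m) := sub_nonneg.mpr (ha (Nat.le_add_left m K))
      have h2 : (0:ℝ) ≤ a (K + m) - a (K + m + 1) := sub_nonneg.mpr (hstep _)
      rw [Finset.sum_range_succ, ih, ← ENNReal.ofReal_add h1 h2]
      rw [show K + 1 + m = K + m + 1 from by omega]
      congr 1; ring
  have hT : Tendsto (fun K => a m - a (K + m)) atTop (𝓝 (a m)) := by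
    simpa using tendsto_const_nhds.sub (hlim.comp (tendsto_add_atTop_nat m))
  exact (tendsto_congr key).mpr ((ENNReal.continuous_ofReal.tendsto _).comp hT)

lemma ladder (a : ℕ → ℝ) (hstep : ∀ n, a (n+1) ≤ a n) (h0 : ∀ n, 0 ≤ a n)
    (hlim : Tendsto a atTop (𝓝 0)) {m : ℕ} {ε : ℝ} (h1 : ts (m+1) < ε) (h2 : ε ≤ ts m) :
    ∑' n, PP a n * ENNReal.ofReal (min ε (ts n) - ts (n+1)) = ENNReal.ofReal (lval a m ε) := by
  rw [← Summable.sum_add_tsum_nat_add' (f := fun n => PP a n * ENNReal.ofReal (min ε (ts n) - ts (n+1)))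
    (k := m+1) ENNReal.summable]

  have hmain : ∑ n ∈ Finset.range (m+1), PP a n * ENNReal.ofReal (min ε (ts n) - ts (n+1))
      = ENNReal.ofReal ((ε - ts (m+1)) * slope a m) := by
    rw [Finset.sum_eq_single_of_mem m (Finset.self_mem_range_succ m)]
    · rw [min_eq_left h2, PP, ← ENNReal.ofReal_mul (slope_nonneg a hstep m), mul_comm]
    · intro b hb hbne
      have hblt : b < m := lt_of_le_of_ne (Nat.lt_succ_iff.mp (Finset.mem_range.mp hb)) hbne
      have : ε ≤ ts (b+1) := h2.trans (ts_anti hblt)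
      have hle : min ε (ts b) - ts (b+1) ≤ 0 := by
        have := min_le_left ε (ts b); linarith
      rw [ENNReal.ofReal_of_nonpos hle, mul_zero]
  have htail : ∑' i, PP a (i + (m+1)) * ENNReal.ofReal (min ε (ts (i + (m+1))) - ts (i + (m+1) + 1))
      = ENNReal.ofReal (a (m+1)) := by
    have heq : ∀ i, PP a (i + (m+1)) * ENNReal.ofReal (min ε (ts (i + (m+1))) - ts (i + (m+1) + 1))
        = ENNReal.ofReal (a (i + (m+1)) - a (i + (m+1) + 1)) := by
      intro i
      have : ts (i + (m+1)) ≤ ts (m+1) := ts_anti (Nat.le_add_left (m+1) i)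
      rw [min_eq_right (this.trans h1.le), PP_mul_dt a hstep]
    rw [tsum_congr heq]
    exact tele a hstep hlim (m+1)
  rw [hmain, htail, ← ENNReal.ofReal_add
    (mul_nonneg (sub_nonneg.mpr h1.le) (slope_nonneg a hstep m)) (h0 (m+1))]
  rw [lval, add_comm]


lemma lval_t (a : ℕ → ℝ) (m : ℕ) : lval a m (ts m) = a m := by
  rw [lval, slope, mul_div_assoc', mul_comm, mul_div_assoc, div_self (ts_sub_ne m), mul_one]
  ring

lemma lval_pos (a : ℕ → ℝ) (hstep : ∀ n, a (n+1) ≤ a n) (hpos : ∀ n, 0 < a n)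
    {m : ℕ} {ε : ℝ} (h1 : ts (m+1) ≤ ε) : 0 < lval a m ε :=
  add_pos_of_pos_of_nonneg (hpos (m+1))
    (mul_nonneg (sub_nonneg.mpr h1) (slope_nonneg a hstep m))

lemma lval_hs_le {m : ℕ} {ε : ℝ} (h1 : ts (m+1) ≤ ε) (h2 : ε ≤ ts m) :
    lval hb m ε ≤ 2 * lval gs m ε := by
  have hD : 0 < ts m - ts (m+1) := sub_pos.mpr (ts_strict m)
  have he1 : 0 ≤ ε - ts (m+1) := sub_nonneg.mpr h1
  have he2 : ε - ts (m+1) ≤ ts m - ts (m+1) := by linarith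
  have k1 := hs_le_two_gs m
  have k2 := hs_le_two_gs (m+1)
  rw [lval, lval, slope, slope]
  have expand1 : hb (m+1) + (ε - ts (m+1)) * ((hb m - hb (m+1)) / (ts m - ts (m+1)))
      = (hb (m+1) * (ts m - ts (m+1)) + (ε - ts (m+1)) * (hb m - hb (m+1))) / (ts m - ts (m+1)) := by
    field_simp
  have expand2 : 2 * (gs (m+1) + (ε - ts (m+1)) * ((gs m - gs (m+1)) / (ts m - ts (m+1))))
      = (2 * gs (m+1) * (ts m - ts (m+1)) + (ε - ts (m+1)) * (2 * gs m - 2 * gs (m+1))) / (ts m - ts (m+1)) := by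
    field_simp
  rw [expand1, expand2, div_le_div_iff_of_pos_right hD]
  nlinarith [mul_nonneg (sub_nonneg.mpr k2) (sub_nonneg.mpr he2),
    mul_nonneg (sub_nonneg.mpr k1) he1]

lemma exists_m {ε : ℝ} (h0 : 0 < ε) (h1 : ε ≤ ts 0) : ∃ m, ts (m+1) < ε ∧ ε ≤ ts m := by
  have hex : ∃ n, ts n < ε := ((tendsto_order.1 ts_tendsto).2 ε h0).exists
  classical
  have hn : ts (Nat.find hex) < ε := Nat.find_spec hex
  have hne : Nat.find hex ≠ 0 := by
    intro h; rw [h] at hn; linarith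
  obtain ⟨m, hm⟩ := Nat.exists_eq_succ_of_ne_zero hne
  refine ⟨m, by rw [← Nat.succ_eq_add_one, ← hm]; exact hn, ?_⟩
  have := Nat.find_min hex (m.lt_succ_self |>.trans_le hm.ge)
  push_neg at this
  exact this


/-! ### the measure -/

def dens : ℝ → ℝ≥0∞ := fun y =>
  (Icc (2:ℝ) 3).indicator (fun _ => 4⁻¹) y
  + (∑' n, (Ico (1 - ts n) (1 - ts (n+1))).indicator (fun _ => PP gs n) y)
  + ∑' n, (Ioc (-1 + ts (n+1)) (-1 + ts n)).indicator (fun _ => PP hb n) y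

lemma dens_meas : Measurable dens := by
  apply Measurable.add
  apply Measurable.add
  · exact measurable_const.indicator measurableSet_Icc
  · exact Measurable.ennreal_tsum fun n => measurable_const.indicator measurableSet_Ico
  · exact Measurable.ennreal_tsum fun n => measurable_const.indicator measurableSet_Ioc

def μ : Measure ℝ := volume.withDensity dens

lemma mu_ac : μ ≪ volume := withDensity_absolutelyContinuous _ _

lemma setLint_ind {s A : Set ℝ} (hs : MeasurableSet s) (hA : MeasurableSet A) (c : ℝ≥0∞) :
    ∫⁻ y in s, A.indicator (fun _ => c) y ∂volume = c * volume (A ∩ s) := by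
  rw [lintegral_indicator hA, Measure.restrict_restrict hA, setLIntegral_const]

lemma mu_apply {s : Set ℝ} (hsm : MeasurableSet s) :
    μ s = 4⁻¹ * volume (Icc (2:ℝ) 3 ∩ s)
      + (∑' n, PP gs n * volume (Ico (1 - ts n) (1 - ts (n+1)) ∩ s))
      + ∑' n, PP hb n * volume (Ioc (-1 + ts (n+1)) (-1 + ts n) ∩ s) := by
  rw [μ, withDensity_apply _ hsm]
  rw [show dens = (fun y => ((Icc (2:ℝ) 3).indicator (fun _ => 4⁻¹) y
      + (∑' n, (Ico (1 - ts n) (1 - ts (n+1))).indicator (fun _ => PP gs n) y))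
      + ∑' n, (Ioc (-1 + ts (n+1)) (-1 + ts n)).indicator (fun _ => PP hb n) y) from rfl]
  rw [lintegral_add_left]
  rw [lintegral_add_left (measurable_const.indicator measurableSet_Icc)]
  · rw [setLint_ind hsm measurableSet_Icc]
    rw [lintegral_tsum fun n => (measurable_const.indicator measurableSet_Ico).aemeasurable,
      lintegral_tsum fun n => (measurable_const.indicator measurableSet_Ioc).aemeasurable]
    rw [tsum_congr (fun n => setLint_ind hsm measurableSet_Ico (PP gs n)),
      tsum_congr (fun n => setLint_ind hsm measurableSet_Ioc (PP hb n))]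
  · exact (measurable_const.indicator measurableSet_Icc).add
      (Measurable.ennreal_tsum fun n => measurable_const.indicator measurableSet_Ico)

lemma vol_between {l u : ℝ} {S : Set ℝ} (h1 : Ioo l u ⊆ S) (h2 : S ⊆ Icc l u) :
    volume S = ENNReal.ofReal (u - l) := by
  apply le_antisymm
  · calc volume S ≤ volume (Icc l u) := measure_mono h2
      _ = ENNReal.ofReal (u - l) := Real.volume_Icc
  · calc ENNReal.ofReal (u - l) = volume (Ioo l u) := Real.volume_Ioo.symm
      _ ≤ volume S := measure_mono h1


lemma inter_Ico {n : ℕ} {ε : ℝ} (hε : 0 < ε) :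
    volume (Ico (1 - ts n) (1 - ts (n+1)) ∩ Ioo (1-ε) (1+ε))
      = ENNReal.ofReal (min ε (ts n) - ts (n+1)) := by
  rw [show ENNReal.ofReal (min ε (ts n) - ts (n+1))
      = ENNReal.ofReal ((1 - ts (n+1)) - (1 - min ε (ts n))) from by congr 1; ring]
  apply vol_between
  · intro y hy
    rcases hy with ⟨hy1, hy2⟩
    constructor
    · constructor
      · have : 1 - min ε (ts n) ≥ 1 - ts n := by
          have := min_le_right ε (ts n); linarith
        linarith
      · exact hy2
    · constructor
      · have : 1 - min ε (ts n) ≥ 1 - ε := by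
          have := min_le_left ε (ts n); linarith
        linarith
      · have := ts_pos (n+1); linarith
  · intro y hy
    rcases hy with ⟨⟨hy1, hy2⟩, hy3, hy4⟩
    constructor
    · rcases le_total ε (ts n) with hc | hc
      · rw [min_eq_left hc]; linarith
      · rw [min_eq_right hc]; linarith
    · linarith

lemma inter_Ioc {n : ℕ} {ε : ℝ} (hε : 0 < ε) :
    volume (Ioc (-1 + ts (n+1)) (-1 + ts n) ∩ Ioo (-1-ε) (-1+ε))
      = ENNReal.ofReal (min ε (ts n) - ts (n+1)) := by
  rw [show ENNReal.ofReal (min ε (ts n) - ts (n+1))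
      = ENNReal.ofReal ((-1 + min ε (ts n)) - (-1 + ts (n+1))) from by congr 1; ring]
  apply vol_between
  · intro y hy
    rcases hy with ⟨hy1, hy2⟩
    have hm1 := min_le_left ε (ts n)
    have hm2 := min_le_right ε (ts n)
    have := ts_pos (n+1)
    exact ⟨⟨hy1, by linarith⟩, by linarith, by linarith⟩
  · intro y hy
    rcases hy with ⟨⟨hy1, hy2⟩, hy3, hy4⟩
    constructor
    · linarith
    · rcases le_total ε (ts n) with hc | hc
      · rw [min_eq_left hc]; linarith
      · rw [min_eq_right hc]; linarith

lemma mu_ball_one {m : ℕ} {ε : ℝ} (h1 : ts (m+1) < ε) (h2 : ε ≤ ts m) :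
    μ (ball (1:ℝ) ε) = ENNReal.ofReal (lval gs m ε) := by
  have hε : 0 < ε := (ts_pos (m+1)).trans h1
  have hεh : ε ≤ 2⁻¹ := h2.trans (ts_le_half m)
  rw [Real.ball_eq_Ioo, mu_apply measurableSet_Ioo]
  have e1 : Icc (2:ℝ) 3 ∩ Ioo (1-ε) (1+ε) = ∅ := by
    apply eq_empty_of_forall_notMem
    rintro y ⟨⟨hy1, -⟩, -, hy2⟩; linarith
  have e2 : ∀ n, Ioc (-1 + ts (n+1)) (-1 + ts n) ∩ Ioo (1-ε) (1+ε) = ∅ := by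
    intro n
    apply eq_empty_of_forall_notMem
    rintro y ⟨⟨-, hy1⟩, hy2, -⟩
    have := ts_le_half n; linarith
  rw [e1]
  simp only [e2, measure_empty, mul_zero, tsum_zero, add_zero]
  rw [tsum_congr (fun n => by rw [inter_Ico hε] :
    ∀ n, PP gs n * volume (Ico (1 - ts n) (1 - ts (n+1)) ∩ Ioo (1-ε) (1+ε))
      = PP gs n * ENNReal.ofReal (min ε (ts n) - ts (n+1)))]
  rw [ladder gs gs_step gs_nonneg gs_tendsto h1 h2]
  simp

lemma mu_ball_neg_one {m : ℕ} {ε : ℝ} (h1 : ts (m+1) < ε) (h2 : ε ≤ ts m) :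
    μ (ball (-1:ℝ) ε) = ENNReal.ofReal (lval hb m ε) := by
  have hε : 0 < ε := (ts_pos (m+1)).trans h1
  have hεh : ε ≤ 2⁻¹ := h2.trans (ts_le_half m)
  rw [Real.ball_eq_Ioo, show (-1:ℝ) - ε = -1 - ε from rfl, mu_apply measurableSet_Ioo]
  have e1 : Icc (2:ℝ) 3 ∩ Ioo (-1-ε) (-1+ε) = ∅ := by
    apply eq_empty_of_forall_notMem
    rintro y ⟨⟨hy1, -⟩, -, hy2⟩; linarith
  have e2 : ∀ n, Ico (1 - ts n) (1 - ts (n+1)) ∩ Ioo (-1-ε) (-1+ε) = ∅ := by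
    intro n
    apply eq_empty_of_forall_notMem
    rintro y ⟨⟨hy1, -⟩, -, hy2⟩
    have := ts_le_half n; linarith
  rw [e1]
  simp only [e2, measure_empty, mul_zero, tsum_zero, add_zero]
  rw [tsum_congr (fun n => by rw [inter_Ioc hε] :
    ∀ n, PP hb n * volume (Ioc (-1 + ts (n+1)) (-1 + ts n) ∩ Ioo (-1-ε) (-1+ε))
      = PP hb n * ENNReal.ofReal (min ε (ts n) - ts (n+1)))]
  rw [ladder hb hs_step hs_nonneg hs_tendsto h1 h2]
  simp

lemma mu_ball_one_t (m : ℕ) : μ (ball (1:ℝ) (ts m)) = ENNReal.ofReal (gs m) := by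
  rw [mu_ball_one (ts_strict m) le_rfl, lval_t]

lemma mu_ball_neg_one_t (m : ℕ) : μ (ball (-1:ℝ) (ts m)) = ENNReal.ofReal (hb m) := by
  rw [mu_ball_neg_one (ts_strict m) le_rfl, lval_t]


/-! ### ratio facts -/

lemma mu_ball_one_pos {ρ : ℝ} (hρ : 0 < ρ) : 0 < μ (ball (1:ℝ) ρ) := by
  obtain ⟨n, hn⟩ := ((tendsto_order.1 ts_tendsto).2 ρ hρ).exists
  calc (0:ℝ≥0∞) < ENNReal.ofReal (gs n) := ENNReal.ofReal_pos.mpr (gs_pos n)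
    _ = μ (ball (1:ℝ) (ts n)) := (mu_ball_one_t n).symm
    _ ≤ μ (ball (1:ℝ) ρ) := measure_mono (ball_subset_ball hn.le)

lemma mu_ball_neg_one_pos {ρ : ℝ} (hρ : 0 < ρ) : 0 < μ (ball (-1:ℝ) ρ) := by
  obtain ⟨n, hn⟩ := ((tendsto_order.1 ts_tendsto).2 ρ hρ).exists
  calc (0:ℝ≥0∞) < ENNReal.ofReal (hb n) := ENNReal.ofReal_pos.mpr (hs_pos n)
    _ = μ (ball (-1:ℝ) (ts n)) := (mu_ball_neg_one_t n).symm
    _ ≤ μ (ball (-1:ℝ) ρ) := measure_mono (ball_subset_ball hn.le)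

lemma ratio_le_two {ε : ℝ} (h0 : 0 < ε) (h1 : ε ≤ ts 0) :
    μ (ball (-1:ℝ) ε) / μ (ball (1:ℝ) ε) ≤ 2 := by
  obtain ⟨m, hm1, hm2⟩ := exists_m h0 h1
  rw [mu_ball_one hm1 hm2, mu_ball_neg_one hm1 hm2]
  apply ENNReal.div_le_of_le_mul
  calc ENNReal.ofReal (lval hb m ε) ≤ ENNReal.ofReal (2 * lval gs m ε) :=
        ENNReal.ofReal_le_ofReal (lval_hs_le hm1.le hm2)
    _ = 2 * ENNReal.ofReal (lval gs m ε) := by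
        rw [ENNReal.ofReal_mul (by norm_num)]; norm_num

lemma ratio_even (k : ℕ) :
    μ (ball (-1:ℝ) (ts (2*k))) / μ (ball (1:ℝ) (ts (2*k))) = 2 := by
  rw [mu_ball_one_t, mu_ball_neg_one_t, hs_even (2*k) (even_two_mul k),
    ENNReal.ofReal_mul (by norm_num)]
  rw [show ENNReal.ofReal (2:ℝ) = 2 from by norm_num]
  rw [mul_div_assoc, ENNReal.div_self (ENNReal.ofReal_pos.mpr (gs_pos _)).ne'
    ENNReal.ofReal_ne_top, mul_one]

lemma ratio_odd (k : ℕ) :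
    μ (ball (-1:ℝ) (ts (2*k+1))) / μ (ball (1:ℝ) (ts (2*k+1)))
      = ENNReal.ofReal (r (2*k+1)) := by
  rw [mu_ball_one_t, mu_ball_neg_one_t,
    hs_odd (2*k+1) (by simp [Nat.even_add_one, parity_simps]),
    ENNReal.ofReal_mul (r_pos _).le]
  rw [mul_div_assoc, ENNReal.div_self (ENNReal.ofReal_pos.mpr (gs_pos _)).ne'
    ENNReal.ofReal_ne_top, mul_one]

lemma ts_seq_tendsto (φ : ℕ → ℕ) (hφ : Tendsto φ atTop atTop) :
    Tendsto (fun k => ts (φ k)) atTop (𝓝[>] (0:ℝ)) := by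
  apply tendsto_nhdsWithin_of_tendsto_nhds_of_eventually_within
  · exact ts_tendsto.comp hφ
  · exact Eventually.of_forall fun k => ts_pos _

lemma two_mul_tendsto : Tendsto (fun k : ℕ => 2*k) atTop atTop :=
  tendsto_atTop_atTop.mpr fun b => ⟨b, fun a ha => by omega⟩

lemma two_mul_add_one_tendsto : Tendsto (fun k : ℕ => 2*k+1) atTop atTop :=
  tendsto_atTop_atTop.mpr fun b => ⟨b, fun a ha => by omega⟩

lemma liminf_zero_of_seq {R : ℝ → ℝ≥0∞} {u : ℕ → ℝ}
    (hu : Tendsto u atTop (𝓝[>] (0:ℝ)))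
    (hR : Tendsto (fun k => R (u k)) atTop (𝓝 0)) :
    liminf R (𝓝[>] (0:ℝ)) = 0 := by
  apply le_antisymm _ (zero_le)
  have h1 : liminf R (𝓝[>] (0:ℝ)) ≤ liminf R (map u atTop) :=
    liminf_le_liminf_of_le hu
  have h2 : liminf R (map u atTop) = liminf (fun k => R (u k)) atTop := by
    rw [Filter.liminf, Filter.liminf, Filter.map_map]; rfl
  rw [h2, hR.liminf_eq] at h1
  exact h1

lemma limsup_ratio_eq_two :
    limsup (fun ε : ℝ => μ (ball (-1:ℝ) ε) / μ (ball (1:ℝ) ε)) (𝓝[>] (0:ℝ)) = 2 := by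
  apply le_antisymm
  · refine limsup_le_of_le (by isBoundedDefault) ?_
    filter_upwards [Ioc_mem_nhdsGT_of_mem (Set.left_mem_Ico.mpr (ts_pos 0))] with ε hε
    exact ratio_le_two hε.1 hε.2
  · refine le_limsup_of_frequently_le ?_ (by isBoundedDefault)
    apply (ts_seq_tendsto _ two_mul_tendsto).frequently
    exact Frequently.of_forall fun k => (ratio_even k).ge

lemma liminf_ratio_eq_zero :
    liminf (fun ε : ℝ => μ (ball (-1:ℝ) ε) / μ (ball (1:ℝ) ε)) (𝓝[>] (0:ℝ)) = 0 := by
  apply liminf_zero_of_seq (ts_seq_tendsto _ two_mul_add_one_tendsto)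
  have : Tendsto (fun k => ENNReal.ofReal (r (2*k+1))) atTop (𝓝 0) := by
    rw [show (0:ℝ≥0∞) = ENNReal.ofReal 0 from by simp]
    exact (ENNReal.continuous_ofReal.tendsto _).comp (r_tendsto.comp two_mul_add_one_tendsto)
  exact this.congr fun k => (ratio_odd k).symm


/-! ### local boundedness away from ±1 -/

def MB (N : ℕ) : ℝ≥0∞ :=
  4⁻¹ + ∑ n ∈ Finset.range N, PP gs n + ∑ n ∈ Finset.range N, PP hb n

lemma MB_ne_top (N : ℕ) : MB N ≠ ⊤ := by
  rw [MB]
  refine ENNReal.add_ne_top.mpr ⟨ENNReal.add_ne_top.mpr ⟨by norm_num, ?_⟩, ?_⟩ <;>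
    exact (ENNReal.sum_lt_top.mpr fun n _ => ENNReal.ofReal_lt_top).ne

lemma ind_le {A : Set ℝ} {c : ℝ≥0∞} (y : ℝ) : A.indicator (fun _ => c) y ≤ c := by
  classical
  by_cases hy : y ∈ A <;> simp [Set.indicator, hy]

lemma dens_le {N : ℕ} {y : ℝ} (hy1 : y ∉ Ico (1 - ts N) 1) (hy2 : y ∉ Ioc (-1:ℝ) (-1 + ts N)) :
    dens y ≤ MB N := by
  rw [dens, MB]
  have key1 : (∑' n, (Ico (1 - ts n) (1 - ts (n+1))).indicator (fun _ => PP gs n) y)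
      ≤ ∑ n ∈ Finset.range N, PP gs n := by
    rw [← Summable.sum_add_tsum_nat_add' (f := fun n =>
      (Ico (1 - ts n) (1 - ts (n+1))).indicator (fun _ => PP gs n) y) (k := N) ENNReal.summable]
    have h0 : ∀ i : ℕ, (Ico (1 - ts (i+N)) (1 - ts (i+N+1))).indicator
        (fun _ => PP gs (i+N)) y = 0 := by
      intro i
      apply indicator_of_notMem
      intro hmem
      apply hy1
      have hts : ts (i+N) ≤ ts N := ts_anti (Nat.le_add_left N i)
      have := ts_pos (i+N+1)
      exact ⟨by linarith [hmem.1], by linarith [hmem.2]⟩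
    rw [tsum_congr h0, tsum_zero, add_zero]
    exact Finset.sum_le_sum fun n _ => ind_le y
  have key2 : (∑' n, (Ioc (-1 + ts (n+1)) (-1 + ts n)).indicator (fun _ => PP hb n) y)
      ≤ ∑ n ∈ Finset.range N, PP hb n := by
    rw [← Summable.sum_add_tsum_nat_add' (f := fun n =>
      (Ioc (-1 + ts (n+1)) (-1 + ts n)).indicator (fun _ => PP hb n) y) (k := N) ENNReal.summable]
    have h0 : ∀ i : ℕ, (Ioc (-1 + ts (i+N+1)) (-1 + ts (i+N))).indicator
        (fun _ => PP hb (i+N)) y = 0 := by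
      intro i
      apply indicator_of_notMem
      intro hmem
      apply hy2
      have hts : ts (i+N) ≤ ts N := ts_anti (Nat.le_add_left N i)
      have := ts_pos (i+N+1)
      exact ⟨by linarith [hmem.1], by linarith [hmem.2]⟩
    rw [tsum_congr h0, tsum_zero, add_zero]
    exact Finset.sum_le_sum fun n _ => ind_le y
  exact add_le_add (add_le_add (ind_le y) key1) key2

lemma mu_ball_le {x ρ : ℝ} {N : ℕ}
    (hd : ∀ y ∈ ball x ρ, y ∉ Ico (1 - ts N) 1 ∧ y ∉ Ioc (-1:ℝ) (-1 + ts N)) :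
    μ (ball x ρ) ≤ MB N * ENNReal.ofReal (2 * ρ) := by
  rw [μ, withDensity_apply _ measurableSet_ball]
  calc ∫⁻ y in ball x ρ, dens y ∂volume ≤ ∫⁻ _ in ball x ρ, MB N ∂volume := by
        apply setLIntegral_mono measurable_const
        intro y hy
        exact dens_le (hd y hy).1 (hd y hy).2
    _ = MB N * volume (ball x ρ) := setLIntegral_const _ _
    _ = MB N * ENNReal.ofReal (2 * ρ) := by rw [Real.volume_ball]


lemma ratio_bound_aux (n : ℕ) :
    ENNReal.ofReal (2 * ts n) / ENNReal.ofReal (gs n) = ENNReal.ofReal (2 * gs n) := by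
  rw [show 2 * ts n = (2 * gs n) * gs n from by rw [ts_eq_gs_sq]; ring,
    ENNReal.ofReal_mul (mul_nonneg (by norm_num) (gs_nonneg n)), mul_div_assoc,
    ENNReal.div_self (ENNReal.ofReal_pos.mpr (gs_pos _)).ne' ENNReal.ofReal_ne_top, mul_one]

lemma liminf_x {x : ℝ} (hx1 : x ≠ 1) (hx2 : x ≠ -1) :
    liminf (fun ε : ℝ => μ (ball x ε) / μ (ball (1:ℝ) ε)) (𝓝[>] (0:ℝ)) = 0 := by
  set δ : ℝ := min |x - 1| |x + 1| / 2 with hδdef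
  have hδ : 0 < δ := by
    apply div_pos _ (by norm_num)
    exact lt_min (abs_pos.mpr (sub_ne_zero.mpr hx1))
      (abs_pos.mpr (by intro hc; apply hx2; linarith))
  obtain ⟨N, hN⟩ := ((tendsto_order.1 ts_tendsto).2 δ hδ).exists
  have hball : ∀ ρ : ℝ, ρ ≤ δ → μ (ball x ρ) ≤ MB N * ENNReal.ofReal (2 * ρ) := by
    intro ρ hρδ
    apply mu_ball_le
    intro y hy
    rw [mem_ball, Real.dist_eq] at hy
    have hyx : |y - x| < δ := lt_of_lt_of_le hy hρδ
    constructor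
    · rintro ⟨hy1, hy2⟩
      have h1 : |y - 1| < δ := by
        rw [abs_sub_comm, abs_of_nonneg (by linarith)]
        linarith
      have : |x - 1| ≤ |x - y| + |y - 1| := abs_sub_le x y 1
      rw [abs_sub_comm x y] at this
      have h2 : min |x - 1| |x + 1| ≤ |x - 1| := min_le_left _ _
      linarith
    · rintro ⟨hy1, hy2⟩
      have h1 : |y + 1| < δ := by
        rw [abs_of_nonneg (by linarith)]
        linarith
      have : |x + 1| ≤ |y - x| + |y + 1| := by
        have h3 := abs_sub_le x y (-1)
        rw [abs_sub_comm x y] at h3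
        simpa [sub_neg_eq_add] using h3
      have h2 : min |x - 1| |x + 1| ≤ |x + 1| := min_le_right _ _
      linarith
  apply liminf_zero_of_seq (ts_seq_tendsto _ two_mul_tendsto)
  have hub : Tendsto (fun k => MB N * ENNReal.ofReal (2 * gs (2*k))) atTop (𝓝 0) := by
    have hin : Tendsto (fun k => ENNReal.ofReal (2 * gs (2*k))) atTop (𝓝 0) := by
      rw [show (0:ℝ≥0∞) = ENNReal.ofReal 0 from by simp]
      apply (ENNReal.continuous_ofReal.tendsto _).comp
      have := (gs_tendsto.comp two_mul_tendsto).const_mul 2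
      simpa using this
    have := ENNReal.Tendsto.const_mul hin (Or.inr (MB_ne_top N))
    simpa using this
  apply tendsto_of_tendsto_of_tendsto_of_le_of_le' tendsto_const_nhds hub
  · exact Eventually.of_forall fun k => zero_le
  · have hev : ∀ᶠ k in atTop, ts (2*k) ≤ δ := by
      have := (ts_tendsto.comp two_mul_tendsto).eventually (ge_mem_nhds hδ)
      filter_upwards [this] with k hk
      exact hk
    filter_upwards [hev] with k hk
    calc μ (ball x (ts (2*k))) / μ (ball (1:ℝ) (ts (2*k)))
        ≤ (MB N * ENNReal.ofReal (2 * ts (2*k))) / μ (ball (1:ℝ) (ts (2*k))) :=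
          ENNReal.div_le_div_right (hball _ hk) _
      _ = MB N * ENNReal.ofReal (2 * gs (2*k)) := by
          rw [mu_ball_one_t, mul_div_assoc, ratio_bound_aux]

lemma mu_univ : μ (univ : Set ℝ) = 1 := by
  rw [mu_apply MeasurableSet.univ]
  simp only [inter_univ]
  rw [Real.volume_Icc]
  rw [tsum_congr (fun n => by
    rw [Real.volume_Ico, show (1 - ts (n+1)) - (1 - ts n) = ts n - ts (n+1) from by ring,
      PP_mul_dt gs gs_step] :
    ∀ n, PP gs n * volume (Ico (1 - ts n) (1 - ts (n+1)))
      = ENNReal.ofReal (gs n - gs (n+1)))]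
  rw [tsum_congr (fun n => by
    rw [Real.volume_Ioc, show (-1 + ts n) - (-1 + ts (n+1)) = ts n - ts (n+1) from by ring,
      PP_mul_dt hb hs_step] :
    ∀ n, PP hb n * volume (Ioc (-1 + ts (n+1)) (-1 + ts n))
      = ENNReal.ofReal (hb n - hb (n+1)))]
  have t1 : ∑' n, ENNReal.ofReal (gs n - gs (n+1)) = ENNReal.ofReal (gs 0) := by
    simpa using tele gs gs_step gs_tendsto 0
  have t2 : ∑' n, ENNReal.ofReal (hb n - hb (n+1)) = ENNReal.ofReal (hb 0) := by
    simpa using tele hb hs_step hs_tendsto 0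
  rw [t1, t2]
  have hg0 : gs 0 = 4⁻¹ := by norm_num [gs, r]
  have hh0 : hb 0 = 2⁻¹ := by norm_num [hb, gs, r]
  rw [hg0, hh0]
  rw [show ((4:ℝ≥0∞)⁻¹) = ENNReal.ofReal (4⁻¹ : ℝ) from by
    rw [ENNReal.ofReal_inv_of_pos (by norm_num), ENNReal.ofReal_ofNat]]
  rw [show ((3:ℝ) - 2) = 1 from by norm_num, ENNReal.ofReal_one, mul_one]
  rw [← ENNReal.ofReal_add (by norm_num) (by norm_num),
    ← ENNReal.ofReal_add (by norm_num) (by norm_num)]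
  norm_num

end OMCex

theorem exists_measure_liminf_M_property_but_not_global_weak_mode :
    ∃ μ : Measure ℝ, IsProbabilityMeasure μ ∧ μ ≪ MeasureTheory.volume ∧
      (-1 : ℝ) ∈ measureSupport μ ∧ (1 : ℝ) ∈ measureSupport μ ∧
      Filter.liminf
        (fun ε : ℝ => μ (Metric.ball (-1) ε) / μ (Metric.ball 1 ε)) (𝓝[>] 0) = 0 ∧
      Filter.limsup
        (fun ε : ℝ => μ (Metric.ball (-1) ε) / μ (Metric.ball 1 ε)) (𝓝[>] 0) = 2 ∧
      (∀ x ∈ measureSupport μ \ {(1 : ℝ)},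
        Filter.liminf
          (fun ε : ℝ => μ (Metric.ball x ε) / μ (Metric.ball 1 ε)) (𝓝[>] 0) = 0) ∧
      ¬ (∀ v : ℝ, Filter.limsup
          (fun ε : ℝ => μ (Metric.ball v ε) / μ (Metric.ball 1 ε)) (𝓝[>] 0) ≤ 1) := by
    classical
  refine ⟨OMCex.μ, ⟨OMCex.mu_univ⟩, OMCex.mu_ac, ?_, ?_, OMCex.liminf_ratio_eq_zero,
    OMCex.limsup_ratio_eq_two, ?_, ?_⟩
  · exact fun ρ hρ => OMCex.mu_ball_neg_one_pos hρ
  · exact fun ρ hρ => OMCex.mu_ball_one_pos hρ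
  · intro x hx
    rcases eq_or_ne x (-1) with rfl | hxne
    · exact OMCex.liminf_ratio_eq_zero
    · exact OMCex.liminf_x (by simpa using hx.2) hxne
  · intro hall
    have h2 := hall (-1)
    rw [OMCex.limsup_ratio_eq_two] at h2
    exact absurd h2 (by norm_num)
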